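/- Let $m \geq 2$ be an integer. The quotient ring $\mathbb{Z}[x]/(x^m, m x^{m-1})$, regarded as an abelian group, is isomorphic to $\mathbb{Z}^{m-1} \oplus \mathbb{Z}/m\mathbb{Z}$. -/

import Mathlib

open Polynomial

theorem stmt_3 (m : ℕ) (hm : 2 ≤ m) :
    Nonempty ((ℤ[X] ⧸ Ideal.span {(X : ℤ[X]) ^ m, C (m : ℤ) * X ^ (m - 1)}) ≃+
      ((Fin (m - 1) → ℤ) × ZMod m)) := by
  set I : Ideal ℤ[X] := Ideal.span {(X : ℤ[X]) ^ m, C (m : ℤ) * X ^ (m - 1)} with hI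
  -- the linear map
  let f : ℤ[X] →ₗ[ℤ] (Fin (m - 1) → ℤ) × ZMod m :=
    LinearMap.prod (LinearMap.pi fun i : Fin (m - 1) => lcoeff ℤ (i : ℕ))
      (((Int.castAddHom (ZMod m)).toIntLinearMap).comp (lcoeff ℤ (m - 1)))
  -- membership characterization of I
  have hmem : ∀ p : ℤ[X], p ∈ I ↔ ((∀ i < m - 1, p.coeff i = 0) ∧ (m : ℤ) ∣ p.coeff (m - 1)) := by
    intro p
    constructor
    · intro hp
      rw [hI, Ideal.mem_span_pair] at hp
      obtain ⟨a, b, rfl⟩ := hp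
      constructor
      · intro i hi
        have h1 : (a * X ^ m).coeff i = 0 := by
          rw [coeff_mul_X_pow']
          simp only [if_neg (by omega : ¬ m ≤ i)]
        have h2 : (b * (C (m : ℤ) * X ^ (m - 1))).coeff i = 0 := by
          have : b * (C (m : ℤ) * X ^ (m - 1)) = (b * C (m : ℤ)) * X ^ (m - 1) := by ring
          rw [this, coeff_mul_X_pow']
          simp only [if_neg (by omega : ¬ m - 1 ≤ i)]
        rw [coeff_add, h1, h2, add_zero]
      · have h1 : (a * X ^ m).coeff (m - 1) = 0 := by
          rw [coeff_mul_X_pow']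
          simp only [if_neg (by omega : ¬ m ≤ m - 1)]
        have h2 : (b * (C (m : ℤ) * X ^ (m - 1))).coeff (m - 1) = m * b.coeff 0 := by
          have : b * (C (m : ℤ) * X ^ (m - 1)) = (b * C (m : ℤ)) * X ^ (m - 1) := by ring
          rw [this, coeff_mul_X_pow']
          simp [mul_comm]
        rw [coeff_add, h1, h2, zero_add]
        exact Dvd.intro _ rfl
    · rintro ⟨h1, ⟨k, hk⟩⟩
      have hdvd : X ^ m ∣ p - C (p.coeff (m - 1)) * X ^ (m - 1) := by
        rw [X_pow_dvd_iff]
        intro d hd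
        rcases lt_or_eq_of_le (Nat.le_sub_one_of_lt hd) with h | h
        · simp [coeff_X_pow, Nat.ne_of_lt h, h1 d h]
        · simp [coeff_X_pow, h]
      obtain ⟨q, hq⟩ := hdvd
      have : p = X ^ m * q + C k * (C (m : ℤ) * X ^ (m - 1)) := by
        rw [← hq, hk, C_mul]
        ring
      rw [this]
      exact add_mem (Ideal.mul_mem_right _ _ (Ideal.subset_span (by simp)))
        (Ideal.mul_mem_left _ _ (Ideal.subset_span (by simp)))
  have : NeZero m := ⟨by omega⟩
  -- kernel = I
  have hker : LinearMap.ker f = I.restrictScalars ℤ := by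
    ext p
    simp only [LinearMap.mem_ker, Submodule.restrictScalars_mem, hmem]
    constructor
    · intro h
      have h1 := congrArg Prod.fst h
      have h2 := congrArg Prod.snd h
      simp only [f, LinearMap.prod_apply, Pi.prod] at h1 h2
      constructor
      · intro i hi
        exact congrFun h1 ⟨i, hi⟩
      · have : ((p.coeff (m - 1) : ℤ) : ZMod m) = 0 := h2
        exact_mod_cast (ZMod.intCast_zmod_eq_zero_iff_dvd _ _).mp this
    · rintro ⟨h1, h2⟩
      have : f p = (0, 0) := by
        simp only [f, LinearMap.prod_apply, Function.prod, Prod.mk.injEq]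
        constructor
        · funext i
          exact h1 i i.isLt
        · simpa [AddMonoidHom.toIntLinearMap, ZMod.intCast_zmod_eq_zero_iff_dvd] using
            (ZMod.intCast_zmod_eq_zero_iff_dvd _ _).mpr h2
      exact this
  -- surjectivity
  have hsurj : Function.Surjective f := by
    rintro ⟨v, z⟩
    refine ⟨(∑ i : Fin (m - 1), C (v i) * X ^ (i : ℕ)) + C ((z.val : ℤ)) * X ^ (m - 1), ?_⟩
    have hc : ∀ d : ℕ, ((∑ i : Fin (m - 1), C (v i) * X ^ (i : ℕ)) + C ((z.val : ℤ)) * X ^ (m - 1)).coeff d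
        = (if h : d < m - 1 then v ⟨d, h⟩ else 0) + (if d = m - 1 then (z.val : ℤ) else 0) := by
      intro d
      rw [coeff_add, finset_sum_coeff]
      congr 1
      · simp only [coeff_C_mul, coeff_X_pow]
        split_ifs with h
        · rw [Finset.sum_eq_single (⟨d, h⟩ : Fin (m - 1))]
          · simp
          · intro b _ hb
            have : (b : ℕ) ≠ d := fun he => hb (by ext; simp [he])
            simp [Ne.symm this]
          · simp
        · apply Finset.sum_eq_zero
          intro b _
          have : (b : ℕ) ≠ d := by omega
          simp [Ne.symm this]
      · simp only [coeff_C_mul, coeff_X_pow]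
        split_ifs with h <;> simp [h]
    ext x
    · simp only [f, LinearMap.prod_apply, Function.prod, LinearMap.pi_apply, lcoeff_apply]
      rw [hc]
      have hx : (x : ℕ) < m - 1 := x.isLt
      simp [dif_pos hx, if_neg (by omega : ¬ (x : ℕ) = m - 1)]
    · simp only [f, LinearMap.prod_apply, Function.prod, LinearMap.comp_apply, lcoeff_apply,
        AddMonoidHom.toIntLinearMap, Int.castAddHom]
      rw [hc]
      simp [ZMod.natCast_val, ZMod.intCast_cast]
  exact ⟨((Submodule.Quotient.restrictScalarsEquiv ℤ I).symm.trans
      ((Submodule.quotEquivOfEq _ _ hker.symm).trans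
        (f.quotKerEquivOfSurjective hsurj))).toAddEquiv⟩
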